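/- The curve γ lies on M, has constant speed ‖γ'(t)‖ = p, and its first curvature scalar (geodesic curvature) with respect to the submanifold M is constant: for all t, (1/p) ‖T'(t) − ⟨T'(t), n(γ(t))⟩ n(γ(t))‖ = |b²β² − a²α²| sin η₀ cos η₀ / (p² q), where T(t) = γ'(t)/p is the unit tangent. (The left-hand side is the norm of the covariant derivative DT/ds on M with respect to arclength, obtained by projecting the ambient derivative onto the tangent space of M.) -/

import Mathlib

open Real
open scoped RealInnerProductSpace

/-- Auxiliary: explicit vector in `EuclideanSpace ℝ (Fin 4)`. -/
def E4 (x0 x1 x2 x3 : ℝ) : EuclideanSpace ℝ (Fin 4) := WithLp.toLp 2 ![x0, x1, x2, x3]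

@[simp] lemma E4_app0 (x0 x1 x2 x3 : ℝ) : E4 x0 x1 x2 x3 0 = x0 := rfl
@[simp] lemma E4_app1 (x0 x1 x2 x3 : ℝ) : E4 x0 x1 x2 x3 1 = x1 := rfl
@[simp] lemma E4_app2 (x0 x1 x2 x3 : ℝ) : E4 x0 x1 x2 x3 2 = x2 := rfl
@[simp] lemma E4_app3 (x0 x1 x2 x3 : ℝ) : E4 x0 x1 x2 x3 3 = x3 := rfl

lemma E4_ext (x y : EuclideanSpace ℝ (Fin 4)) (h0 : x 0 = y 0) (h1 : x 1 = y 1)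
    (h2 : x 2 = y 2) (h3 : x 3 = y 3) : x = y := by
  apply PiLp.ext
  intro i
  fin_cases i <;> assumption

lemma E4_inner (x0 x1 x2 x3 y0 y1 y2 y3 : ℝ) :
    (inner ℝ (E4 x0 x1 x2 x3) (E4 y0 y1 y2 y3) : ℝ) = x0*y0 + x1*y1 + x2*y2 + x3*y3 := by
  simp [E4, PiLp.inner_apply, RCLike.inner_apply, Fin.sum_univ_four]
  ring

lemma E4_norm (x0 x1 x2 x3 : ℝ) :
    ‖E4 x0 x1 x2 x3‖ = Real.sqrt (x0^2+x1^2+x2^2+x3^2) := by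
  rw [EuclideanSpace.norm_eq]
  simp [E4, Fin.sum_univ_four, sq_abs]

lemma hasDerivAt_E4 (g : ℝ → EuclideanSpace ℝ (Fin 4)) (f0 f1 f2 f3 : ℝ → ℝ)
    (d0 d1 d2 d3 : ℝ) (t : ℝ)
    (hg : ∀ u, g u = E4 (f0 u) (f1 u) (f2 u) (f3 u))
    (h0 : HasDerivAt f0 d0 t) (h1 : HasDerivAt f1 d1 t)
    (h2 : HasDerivAt f2 d2 t) (h3 : HasDerivAt f3 d3 t) :
    HasDerivAt g (E4 d0 d1 d2 d3) t := by
  have hf : HasDerivAt (fun u => (![f0 u, f1 u, f2 u, f3 u] : Fin 4 → ℝ))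
      (![d0, d1, d2, d3]) t := by
    rw [hasDerivAt_pi]
    intro i
    fin_cases i
    exacts [h0, h1, h2, h3]
  have H := (EuclideanSpace.equiv (Fin 4) ℝ).symm.hasFDerivAt.comp_hasDerivAt t hf
  have hg' : g = ⇑(EuclideanSpace.equiv (Fin 4) ℝ).symm ∘ fun u => ![f0 u, f1 u, f2 u, f3 u] := by
    funext u; rw [hg u]; rfl
  rw [hg']; exact H

lemma D1aux (A k t : ℝ) :
    HasDerivAt (fun u => A * Real.cos (k*u)) (-(A*k*Real.sin (k*t))) t := by
  have h := (((hasDerivAt_id t).const_mul k).cos).const_mul A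
  refine h.congr_deriv ?_
  simp only [id_eq]
  ring

lemma D2aux (A k t : ℝ) :
    HasDerivAt (fun u => A * Real.sin (k*u)) (A*k*Real.cos (k*t)) t := by
  have h := (((hasDerivAt_id t).const_mul k).sin).const_mul A
  refine h.congr_deriv ?_
  simp only [id_eq]
  ring

/-- The curve `γ(t) = (a sin η₀ cos(αt), a sin η₀ sin(αt), b cos η₀ cos(βt), b cos η₀ sin(βt))`
lies on the degenerate 3-ellipsoid `M = {(x₁²+x₂²)/a² + (x₃²+x₄²)/b² = 1}` in ℝ⁴, has constant
speed `p = √(a²α² sin²η₀ + b²β² cos²η₀)`, and its geodesic curvature with respect to `M`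
(the norm of the projection of `DT/ds` onto the tangent space of `M`) is the constant
`|b²β² − a²α²| sin η₀ cos η₀ / (p² q)` where `q = √(a² cos²η₀ + b² sin²η₀)`. -/
theorem ellipsoid_curve_constant_curvature
    (a b η₀ α β : ℝ) (ha : 0 < a) (hb : 0 < b) (hη₀ : η₀ ∈ Set.Ioo 0 (Real.pi / 2))
    (hαβ : ¬(α = 0 ∧ β = 0))
    (M : Set (EuclideanSpace ℝ (Fin 4)))
    (hM : M = {x : EuclideanSpace ℝ (Fin 4) |
        ((x 0) ^ 2 + (x 1) ^ 2) / a ^ 2 + ((x 2) ^ 2 + (x 3) ^ 2) / b ^ 2 = 1})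
    (ν n : EuclideanSpace ℝ (Fin 4) → EuclideanSpace ℝ (Fin 4))
    (hν : ∀ x, ν x = ![x 0 / a ^ 2, x 1 / a ^ 2, x 2 / b ^ 2, x 3 / b ^ 2])
    (hn : ∀ x, n x = ‖ν x‖⁻¹ • ν x)
    (γ : ℝ → EuclideanSpace ℝ (Fin 4))
    (hγ : ∀ t, γ t = ![a * Real.sin η₀ * Real.cos (α * t), a * Real.sin η₀ * Real.sin (α * t),
        b * Real.cos η₀ * Real.cos (β * t), b * Real.cos η₀ * Real.sin (β * t)])
    (p q : ℝ)
    (hp : p = Real.sqrt (a ^ 2 * α ^ 2 * Real.sin η₀ ^ 2 + b ^ 2 * β ^ 2 * Real.cos η₀ ^ 2))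
    (hq : q = Real.sqrt (a ^ 2 * Real.cos η₀ ^ 2 + b ^ 2 * Real.sin η₀ ^ 2))
    (T : ℝ → EuclideanSpace ℝ (Fin 4)) (hT : ∀ t, T t = p⁻¹ • deriv γ t) :
    (∀ t, γ t ∈ M) ∧ (∀ t, ‖deriv γ t‖ = p) ∧
      (∀ t, (1 / p) * ‖deriv T t - ⟪deriv T t, n (γ t)⟫ • n (γ t)‖
        = |b ^ 2 * β ^ 2 - a ^ 2 * α ^ 2| * Real.sin η₀ * Real.cos η₀ / (p ^ 2 * q)) := by
  obtain ⟨h0η, h2η⟩ := hη₀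
  have hs : 0 < Real.sin η₀ := Real.sin_pos_of_pos_of_lt_pi h0η (by linarith [Real.pi_pos])
  have hc : 0 < Real.cos η₀ := Real.cos_pos_of_mem_Ioo ⟨by linarith [Real.pi_pos], h2η⟩
  have ha0 : a ≠ 0 := ne_of_gt ha
  have hb0 : b ≠ 0 := ne_of_gt hb
  have hqpos : 0 < q := by
    rw [hq]
    apply Real.sqrt_pos.2
    have h1 : 0 < a ^ 2 * Real.cos η₀ ^ 2 := by positivity
    have h2 : 0 ≤ b ^ 2 * Real.sin η₀ ^ 2 := by positivity
    linarith
  have hq0 : q ≠ 0 := ne_of_gt hqpos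
  have hq2 : q ^ 2 = a ^ 2 * Real.cos η₀ ^ 2 + b ^ 2 * Real.sin η₀ ^ 2 := by
    rw [hq, Real.sq_sqrt (by positivity)]
  have hppos : 0 < p := by
    rw [hp]
    apply Real.sqrt_pos.2
    rcases not_and_or.mp hαβ with h | h
    · have hα2 : 0 < α ^ 2 := lt_of_le_of_ne (sq_nonneg α) (Ne.symm (pow_ne_zero 2 h))
      have h1 : 0 < a ^ 2 * α ^ 2 * Real.sin η₀ ^ 2 := by positivity
      have h2 : 0 ≤ b ^ 2 * β ^ 2 * Real.cos η₀ ^ 2 := by positivity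
      linarith
    · have hβ2 : 0 < β ^ 2 := lt_of_le_of_ne (sq_nonneg β) (Ne.symm (pow_ne_zero 2 h))
      have h1 : 0 ≤ a ^ 2 * α ^ 2 * Real.sin η₀ ^ 2 := by positivity
      have h2 : 0 < b ^ 2 * β ^ 2 * Real.cos η₀ ^ 2 := by positivity
      linarith
  have hp0 : p ≠ 0 := ne_of_gt hppos
  -- components of γ
  have e0 : ∀ t : ℝ, γ t 0 = a * Real.sin η₀ * Real.cos (α * t) := fun t => by rw [hγ t]; rfl
  have e1 : ∀ t : ℝ, γ t 1 = a * Real.sin η₀ * Real.sin (α * t) := fun t => by rw [hγ t]; rfl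
  have e2 : ∀ t : ℝ, γ t 2 = b * Real.cos η₀ * Real.cos (β * t) := fun t => by rw [hγ t]; rfl
  have e3 : ∀ t : ℝ, γ t 3 = b * Real.cos η₀ * Real.sin (β * t) := fun t => by rw [hγ t]; rfl
  -- derivative of γ
  have hγd : ∀ t : ℝ, HasDerivAt γ
      (E4 (-(a*Real.sin η₀*α*Real.sin (α*t))) (a*Real.sin η₀*α*Real.cos (α*t))
          (-(b*Real.cos η₀*β*Real.sin (β*t))) (b*Real.cos η₀*β*Real.cos (β*t))) t := by
    intro t
    exact hasDerivAt_E4 γ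
      (fun u => a*Real.sin η₀ * Real.cos (α*u)) (fun u => a*Real.sin η₀ * Real.sin (α*u))
      (fun u => b*Real.cos η₀ * Real.cos (β*u)) (fun u => b*Real.cos η₀ * Real.sin (β*u))
      _ _ _ _ t (fun u => by rw [← WithLp.toLp_ofLp (x := γ u), hγ u]; rfl)
      (D1aux (a*Real.sin η₀) α t) (D2aux (a*Real.sin η₀) α t)
      (D1aux (b*Real.cos η₀) β t) (D2aux (b*Real.cos η₀) β t)
  have hγderiv : ∀ t : ℝ, deriv γ t
      = E4 (-(a*Real.sin η₀*α*Real.sin (α*t))) (a*Real.sin η₀*α*Real.cos (α*t))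
          (-(b*Real.cos η₀*β*Real.sin (β*t))) (b*Real.cos η₀*β*Real.cos (β*t)) :=
    fun t => (hγd t).deriv
  -- T explicitly
  have hTcomp : ∀ u : ℝ, T u
      = E4 (-(p⁻¹*(a*Real.sin η₀*α)) * Real.sin (α*u)) ((p⁻¹*(a*Real.sin η₀*α)) * Real.cos (α*u))
          (-(p⁻¹*(b*Real.cos η₀*β)) * Real.sin (β*u)) ((p⁻¹*(b*Real.cos η₀*β)) * Real.cos (β*u)) := by
    intro u
    rw [hT u, hγderiv u]
    apply E4_ext <;>
      simp only [PiLp.smul_apply, smul_eq_mul, E4_app0, E4_app1, E4_app2, E4_app3] <;> ring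
  -- derivative of T
  have hTd : ∀ t : ℝ, HasDerivAt T
      (E4 ((-(p⁻¹*(a*Real.sin η₀*α)))*α*Real.cos (α*t))
          (-((p⁻¹*(a*Real.sin η₀*α))*α*Real.sin (α*t)))
          ((-(p⁻¹*(b*Real.cos η₀*β)))*β*Real.cos (β*t))
          (-((p⁻¹*(b*Real.cos η₀*β))*β*Real.sin (β*t)))) t := by
    intro t
    exact hasDerivAt_E4 T
      (fun u => (-(p⁻¹*(a*Real.sin η₀*α))) * Real.sin (α*u))
      (fun u => (p⁻¹*(a*Real.sin η₀*α)) * Real.cos (α*u))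
      (fun u => (-(p⁻¹*(b*Real.cos η₀*β))) * Real.sin (β*u))
      (fun u => (p⁻¹*(b*Real.cos η₀*β)) * Real.cos (β*u))
      _ _ _ _ t hTcomp
      (D2aux (-(p⁻¹*(a*Real.sin η₀*α))) α t) (D1aux (p⁻¹*(a*Real.sin η₀*α)) α t)
      (D2aux (-(p⁻¹*(b*Real.cos η₀*β))) β t) (D1aux (p⁻¹*(b*Real.cos η₀*β)) β t)
  have hTderiv : ∀ t : ℝ, deriv T t
      = E4 ((-(p⁻¹*(a*Real.sin η₀*α)))*α*Real.cos (α*t))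
          (-((p⁻¹*(a*Real.sin η₀*α))*α*Real.sin (α*t)))
          ((-(p⁻¹*(b*Real.cos η₀*β)))*β*Real.cos (β*t))
          (-((p⁻¹*(b*Real.cos η₀*β))*β*Real.sin (β*t))) :=
    fun t => (hTd t).deriv
  -- ν along γ
  have hνγ : ∀ t : ℝ, ν (γ t)
      = E4 (Real.sin η₀*Real.cos (α*t)/a) (Real.sin η₀*Real.sin (α*t)/a)
          (Real.cos η₀*Real.cos (β*t)/b) (Real.cos η₀*Real.sin (β*t)/b) := by
    intro t
    rw [← WithLp.toLp_ofLp (x := ν (γ t)), hν (γ t)]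
    refine E4_ext _ _ ?_ ?_ ?_ ?_
    · show γ t 0 / a ^ 2 = Real.sin η₀*Real.cos (α*t)/a
      rw [e0 t, div_eq_div_iff (pow_ne_zero 2 ha0) ha0]; ring
    · show γ t 1 / a ^ 2 = Real.sin η₀*Real.sin (α*t)/a
      rw [e1 t, div_eq_div_iff (pow_ne_zero 2 ha0) ha0]; ring
    · show γ t 2 / b ^ 2 = Real.cos η₀*Real.cos (β*t)/b
      rw [e2 t, div_eq_div_iff (pow_ne_zero 2 hb0) hb0]; ring
    · show γ t 3 / b ^ 2 = Real.cos η₀*Real.sin (β*t)/b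
      rw [e3 t, div_eq_div_iff (pow_ne_zero 2 hb0) hb0]; ring
  have hν_norm : ∀ t : ℝ, ‖ν (γ t)‖ = q / (a*b) := by
    intro t
    rw [hνγ t, E4_norm]
    have h1 : (Real.sin η₀*Real.cos (α*t)/a)^2 + (Real.sin η₀*Real.sin (α*t)/a)^2
        + (Real.cos η₀*Real.cos (β*t)/b)^2 + (Real.cos η₀*Real.sin (β*t)/b)^2
        = (q/(a*b))^2 := by
      rw [show (q/(a*b))^2 = q^2/(a*b)^2 from div_pow .., hq2]
      field_simp
      linear_combination (b^2*Real.sin η₀^2) * Real.sin_sq_add_cos_sq (α*t)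
        + (a^2*Real.cos η₀^2) * Real.sin_sq_add_cos_sq (t*β)
    rw [h1, Real.sqrt_sq (div_nonneg hqpos.le (by positivity))]
  have hnγ : ∀ t : ℝ, n (γ t)
      = E4 (b*Real.sin η₀*Real.cos (α*t)/q) (b*Real.sin η₀*Real.sin (α*t)/q)
          (a*Real.cos η₀*Real.cos (β*t)/q) (a*Real.cos η₀*Real.sin (β*t)/q) := by
    intro t
    rw [hn (γ t), hν_norm t, hνγ t]
    apply E4_ext <;>
      simp only [PiLp.smul_apply, smul_eq_mul, E4_app0, E4_app1, E4_app2, E4_app3] <;>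
      field_simp <;> ring
  refine ⟨?_, ?_, ?_⟩
  · -- membership
    intro t
    rw [hM]
    simp only [Set.mem_setOf_eq]
    rw [e0 t, e1 t, e2 t, e3 t]
    field_simp
    linear_combination (Real.sin η₀^2) * Real.sin_sq_add_cos_sq (α*t)
      + (Real.cos η₀^2) * Real.sin_sq_add_cos_sq (t*β)
      + Real.sin_sq_add_cos_sq η₀
  · -- speed
    intro t
    rw [hγderiv t, E4_norm, hp]
    congr 1
    linear_combination (a^2*Real.sin η₀^2*α^2) * Real.sin_sq_add_cos_sq (α*t)
      + (b^2*Real.cos η₀^2*β^2) * Real.sin_sq_add_cos_sq (β*t)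
  · -- curvature
    intro t
    rw [hTderiv t, hnγ t]
    have hinner : (inner ℝ
        (E4 ((-(p⁻¹*(a*Real.sin η₀*α)))*α*Real.cos (α*t))
            (-((p⁻¹*(a*Real.sin η₀*α))*α*Real.sin (α*t)))
            ((-(p⁻¹*(b*Real.cos η₀*β)))*β*Real.cos (β*t))
            (-((p⁻¹*(b*Real.cos η₀*β))*β*Real.sin (β*t))))
        (E4 (b*Real.sin η₀*Real.cos (α*t)/q) (b*Real.sin η₀*Real.sin (α*t)/q)
            (a*Real.cos η₀*Real.cos (β*t)/q) (a*Real.cos η₀*Real.sin (β*t)/q)) : ℝ)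
        = -(a*b*(α^2*Real.sin η₀^2 + β^2*Real.cos η₀^2))/(p*q) := by
      rw [E4_inner]
      linear_combination (-(a*b*Real.sin η₀^2*α^2/(p*q))) * Real.sin_sq_add_cos_sq (α*t)
        + (-(a*b*Real.cos η₀^2*β^2/(p*q))) * Real.sin_sq_add_cos_sq (β*t)
    rw [hinner]
    have hXv :
        (E4 ((-(p⁻¹*(a*Real.sin η₀*α)))*α*Real.cos (α*t))
            (-((p⁻¹*(a*Real.sin η₀*α))*α*Real.sin (α*t)))
            ((-(p⁻¹*(b*Real.cos η₀*β)))*β*Real.cos (β*t))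
            (-((p⁻¹*(b*Real.cos η₀*β))*β*Real.sin (β*t))))
          - (-(a*b*(α^2*Real.sin η₀^2 + β^2*Real.cos η₀^2))/(p*q)) •
        (E4 (b*Real.sin η₀*Real.cos (α*t)/q) (b*Real.sin η₀*Real.sin (α*t)/q)
            (a*Real.cos η₀*Real.cos (β*t)/q) (a*Real.cos η₀*Real.sin (β*t)/q))
        = E4 (a*Real.sin η₀*Real.cos η₀^2*(b^2*β^2 - a^2*α^2)/(p*q^2) * Real.cos (α*t))
            (a*Real.sin η₀*Real.cos η₀^2*(b^2*β^2 - a^2*α^2)/(p*q^2) * Real.sin (α*t))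
            (-(b*Real.cos η₀*Real.sin η₀^2*(b^2*β^2 - a^2*α^2)/(p*q^2)) * Real.cos (β*t))
            (-(b*Real.cos η₀*Real.sin η₀^2*(b^2*β^2 - a^2*α^2)/(p*q^2)) * Real.sin (β*t)) := by
      apply E4_ext <;>
        simp only [PiLp.sub_apply, PiLp.smul_apply, smul_eq_mul,
          E4_app0, E4_app1, E4_app2, E4_app3]
      · field_simp
        linear_combination (-(Real.cos (α*t)*α^2)) * hq2
      · field_simp
        linear_combination (-(Real.sin (α*t)*α^2)) * hq2
      · field_simp
        linear_combination (-(Real.cos (β*t)*β^2)) * hq2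
      · field_simp
        linear_combination (-(Real.sin (β*t)*β^2)) * hq2
    rw [hXv, E4_norm]
    have hsum : (a*Real.sin η₀*Real.cos η₀^2*(b^2*β^2 - a^2*α^2)/(p*q^2) * Real.cos (α*t))^2
        + (a*Real.sin η₀*Real.cos η₀^2*(b^2*β^2 - a^2*α^2)/(p*q^2) * Real.sin (α*t))^2
        + (-(b*Real.cos η₀*Real.sin η₀^2*(b^2*β^2 - a^2*α^2)/(p*q^2)) * Real.cos (β*t))^2
        + (-(b*Real.cos η₀*Real.sin η₀^2*(b^2*β^2 - a^2*α^2)/(p*q^2)) * Real.sin (β*t))^2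
        = ((b^2*β^2 - a^2*α^2)*Real.sin η₀*Real.cos η₀/(p*q))^2 := by
      field_simp
      linear_combination
        ((b^2*β^2 - a^2*α^2)^2*a^2*Real.cos η₀^2) * Real.sin_sq_add_cos_sq (α*t)
        + ((b^2*β^2 - a^2*α^2)^2*b^2*Real.sin η₀^2) * Real.sin_sq_add_cos_sq (β*t)
        - (b^2*β^2 - a^2*α^2)^2 * hq2
    rw [hsum, Real.sqrt_sq_eq_abs, abs_div, abs_mul, abs_mul,
      abs_of_pos hs, abs_of_pos hc, abs_of_pos (mul_pos hppos hqpos)]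
    ring
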